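/- Let A be a finite set, P a probability mass function on A, ρ a distortion function on A×A, and define the Shannon rate-distortion function R_S(D) = inf { I(X;Y) : X ∼ P, E[ρ(X,Y)] ≤ D }, the infimum over joint laws of (X,Y) on A×A. Then for any n ≥ 1 and any nonempty codebook C_n ⊆ A^n, if D = E_{P^n}[min_{y∈C_n} ρ_n(X_1^n,y)], then (1/n) log |C_n| ≥ R_S(D). -/

import Mathlib

open scoped BigOperators

/-- `W` is a feasible coupling: a pmf on `A × A` with first marginal `P` and
expected distortion at most `D`. -/
def Feasible {A : Type*} [Fintype A] (P : A → ℝ) (ρ : A → A → ℝ) (D : ℝ)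
    (W : A × A → ℝ) : Prop :=
  (∀ p, 0 ≤ W p) ∧ (∑ p, W p) = 1 ∧ (∀ x, (∑ y, W (x, y)) = P x) ∧
    (∑ p : A × A, W p * ρ p.1 p.2) ≤ D

/-- The objective `H(W ‖ W_X × W_Y) + E_{W_Y}[log M(Y)]`. -/
noncomputable def obj {A : Type*} [Fintype A] (M : A → ℝ) (W : A × A → ℝ) : ℝ :=
  (∑ p : A × A, W p * Real.log (W p / ((∑ y, W (p.1, y)) * (∑ x, W (x, p.2)))))
    + ∑ y, (∑ x, W (x, y)) * Real.log (M y)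

/-- The rate function `R(D) = inf { H(W‖W_X×W_Y) + E_{W_Y}[log M] : W_X = P, E_W ρ ≤ D }`. -/
noncomputable def massRate {A : Type*} [Fintype A] (P : A → ℝ) (ρ : A → A → ℝ)
    (M : A → ℝ) (D : ℝ) : ℝ :=
  sInf (obj M '' {W | Feasible P ρ D W})

/-- Mutual information of a joint pmf `W` on `S × T`. -/
noncomputable def mi {S T : Type*} [Fintype S] [Fintype T] (W : S × T → ℝ) : ℝ :=
  ∑ p : S × T, W p * Real.log (W p / ((∑ t, W (p.1, t)) * (∑ s, W (s, p.2))))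

open Finset

lemma pw_logsum (u v c : ℝ) (hu : 0 ≤ u) (hv : 0 ≤ v) (hc : 0 < c) (hz : v = 0 → u = 0) :
    u * Real.log c + u - c * v ≤ u * Real.log (u / v) := by
  rcases eq_or_lt_of_le hu with h0 | h0
  · rw [← h0]; simp; positivity
  · have hv' : 0 < v := by
      rcases eq_or_lt_of_le hv with h | h
      · exact absurd (hz h.symm) (ne_of_gt h0)
      · exact h
    have key : Real.log (v * c / u) ≤ v * c / u - 1 :=
      Real.log_le_sub_one_of_pos (by positivity)
    have h1 : Real.log (u / (v * c)) = - Real.log (v * c / u) := by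
      rw [← Real.log_inv]; congr 1; field_simp
    have h2 : Real.log (u / v) = Real.log (u / (v * c)) + Real.log c := by
      rw [← Real.log_mul (by positivity) (ne_of_gt hc)]
      congr 1; field_simp
    have h3 : 1 - v * c / u ≤ Real.log (u / (v * c)) := by rw [h1]; linarith
    have h4 : u * (1 - v * c / u) = u - c * v := by field_simp
    nlinarith [mul_le_mul_of_nonneg_left h3 hu, h4]

lemma logsum {ι : Type*} (s : Finset ι) (u v : ι → ℝ)
    (hu : ∀ i ∈ s, 0 ≤ u i) (hv : ∀ i ∈ s, 0 ≤ v i)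
    (hz : ∀ i ∈ s, v i = 0 → u i = 0) :
    (∑ i ∈ s, u i) * Real.log ((∑ i ∈ s, u i) / (∑ i ∈ s, v i))
      ≤ ∑ i ∈ s, u i * Real.log (u i / v i) := by
  set S := ∑ i ∈ s, u i with hS
  set T := ∑ i ∈ s, v i with hT
  have hS0 : 0 ≤ S := Finset.sum_nonneg hu
  have hT0 : 0 ≤ T := Finset.sum_nonneg hv
  rcases eq_or_lt_of_le hS0 with h0 | h0
  · have : ∀ i ∈ s, u i = 0 := by
      intro i hi
      have := (Finset.sum_eq_zero_iff_of_nonneg hu).1 h0.symm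
      exact this i hi
    rw [← h0]
    simp only [zero_mul]
    apply Finset.sum_nonneg
    intro i hi; rw [this i hi]; simp
  · have hT' : 0 < T := by
      rcases eq_or_lt_of_le hT0 with h | h
      · exfalso
        have hv0 := (Finset.sum_eq_zero_iff_of_nonneg hv).1 h.symm
        have : S = 0 := Finset.sum_eq_zero (fun i hi => hz i hi (hv0 i hi))
        exact absurd this (ne_of_gt h0)
      · exact h
    have hc : 0 < S / T := by positivity
    have key : ∀ i ∈ s, u i * Real.log (S / T) + u i - (S / T) * v i
        ≤ u i * Real.log (u i / v i) :=
      fun i hi => pw_logsum (u i) (v i) (S / T) (hu i hi) (hv i hi) hc (hz i hi)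
    have hsum := Finset.sum_le_sum key
    rw [Finset.sum_sub_distrib, Finset.sum_add_distrib, ← Finset.sum_mul, ← Finset.mul_sum] at hsum
    have : S / T * T = S := by field_simp
    linarith


noncomputable def QQ {A : Type*} [Fintype A] (P : A → ℝ) (n : ℕ) (x : Fin n → A) : ℝ :=
  ∏ i, P (x i)

noncomputable def WWi {A : Type*} [Fintype A] [DecidableEq A] (P : A → ℝ) (n : ℕ)
    (φ : (Fin n → A) → (Fin n → A)) (i : Fin n) (p : A × A) : ℝ :=
  ∑ x : Fin n → A, if p = (x i, φ x i) then QQ P n x else 0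

section Aux
variable {A : Type*} [Fintype A] [DecidableEq A] (P : A → ℝ) (n : ℕ)
  (φ : (Fin n → A) → (Fin n → A))

lemma sum_QQ_mul (hP1 : ∑ a, P a = 1) (i : Fin n) (h : A → ℝ) :
    ∑ x : Fin n → A, QQ P n x * h (x i) = ∑ a, P a * h a := by
  have step : ∀ x : Fin n → A, QQ P n x * h (x i)
      = ∏ j, (if j = i then P (x j) * h (x j) else P (x j)) := by
    intro x
    have : (fun j => if j = i then P (x j) * h (x j) else P (x j))
        = fun j => P (x j) * (if j = i then h (x j) else 1) := by
      funext j; split <;> ring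
    rw [this, Finset.prod_mul_distrib, Finset.prod_ite_eq' univ i (fun j => h (x j))]
    simp [QQ, mul_comm]
  rw [Finset.sum_congr rfl (fun x _ => step x)]
  have e1 : ∑ x : Fin n → A, ∏ j, (if j = i then P (x j) * h (x j) else P (x j))
      = ∑ x ∈ Fintype.piFinset (fun _ : Fin n => (univ : Finset A)),
          ∏ j, (fun j a => if j = i then P a * h a else P a) j (x j) := by
    rw [Fintype.piFinset_univ]
  have e2 := Finset.prod_univ_sum (fun _ : Fin n => (univ : Finset A))
    (fun j a => if j = i then P a * h a else P a)
  rw [e1, ← e2]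
  have e3 : ∀ j : Fin n, (∑ a, (if j = i then P a * h a else P a))
      = (if j = i then ∑ a, P a * h a else 1) := by
    intro j; split <;> simp [hP1]
  rw [Finset.prod_congr rfl (fun j _ => e3 j), Finset.prod_ite_eq' univ i
    (fun _ => ∑ a, P a * h a)]
  simp

lemma sum_WWi_mul (i : Fin n) (F : A × A → ℝ) :
    ∑ p : A × A, WWi P n φ i p * F p = ∑ x : Fin n → A, QQ P n x * F (x i, φ x i) := by
  unfold WWi
  simp only [Finset.sum_mul]
  rw [Finset.sum_comm]
  refine Finset.sum_congr rfl (fun x _ => ?_)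
  have : ∀ p : A × A, (if p = (x i, φ x i) then QQ P n x else 0) * F p
      = (if p = (x i, φ x i) then QQ P n x * F p else 0) := by
    intro p; split <;> simp
  rw [Finset.sum_congr rfl (fun p _ => this p), Finset.sum_ite_eq' univ (x i, φ x i)
    (fun p => QQ P n x * F p)]
  simp

lemma QQ_nonneg (hP0 : ∀ a, 0 ≤ P a) (x : Fin n → A) : 0 ≤ QQ P n x :=
  Finset.prod_nonneg (fun i _ => hP0 _)

lemma WWi_nonneg (hP0 : ∀ a, 0 ≤ P a) (i : Fin n) (p : A × A) : 0 ≤ WWi P n φ i p := by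
  apply Finset.sum_nonneg
  intro x _
  split
  · exact QQ_nonneg P n hP0 x
  · exact le_refl 0

lemma WWi_margX (hP1 : ∑ a, P a = 1) (i : Fin n) (a : A) :
    ∑ b, WWi P n φ i (a, b) = P a := by
  have key := sum_WWi_mul P n φ i (fun p => if p.1 = a then 1 else 0)
  rw [Fintype.sum_prod_type] at key
  simp only [mul_ite, mul_one, mul_zero] at key
  have e1 : ∀ a' : A, (∑ b : A, if a' = a then WWi P n φ i (a', b) else 0)
      = (if a' = a then ∑ b, WWi P n φ i (a', b) else 0) := by
    intro a'; split <;> simp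
  rw [Finset.sum_congr rfl (fun a' _ => e1 a'),
    Finset.sum_ite_eq' univ a (fun a' => ∑ b, WWi P n φ i (a', b))] at key
  simp only [mem_univ, if_true] at key
  rw [key]
  have e2 : ∀ x : Fin n → A, (if x i = a then QQ P n x else 0)
      = QQ P n x * (if x i = a then 1 else 0) := by intro x; split <;> simp
  rw [Finset.sum_congr rfl (fun x _ => e2 x),
    sum_QQ_mul P n hP1 i (fun a' => if a' = a then 1 else 0)]
  simp

lemma WWi_margY (i : Fin n) (b : A) :
    ∑ a, WWi P n φ i (a, b) = ∑ x : Fin n → A, QQ P n x * (if φ x i = b then 1 else 0) := by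
  have key := sum_WWi_mul P n φ i (fun p => if p.2 = b then 1 else 0)
  rw [Fintype.sum_prod_type_right] at key
  simp only [mul_ite, mul_one, mul_zero] at key
  have e1 : ∀ b' : A, (∑ a : A, if b' = b then WWi P n φ i (a, b') else 0)
      = (if b' = b then ∑ a, WWi P n φ i (a, b') else 0) := by
    intro b'; split <;> simp
  rw [Finset.sum_congr rfl (fun b' _ => e1 b'),
    Finset.sum_ite_eq' univ b (fun b' => ∑ a, WWi P n φ i (a, b'))] at key
  simp only [mem_univ, if_true] at key
  rw [key]
  refine Finset.sum_congr rfl (fun x _ => ?_)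
  split <;> simp


lemma WWi_le_P (hP0 : ∀ a, 0 ≤ P a) (hP1 : ∑ a, P a = 1) (i : Fin n) (a b : A) :
    WWi P n φ i (a, b) ≤ P a := by
  rw [← WWi_margX P n φ hP1 i a]
  exact Finset.single_le_sum (fun b' _ => WWi_nonneg P n φ hP0 i (a, b')) (mem_univ b)

lemma WWi_le_qqi (hP0 : ∀ a, 0 ≤ P a) (i : Fin n) (a b : A) :
    WWi P n φ i (a, b) ≤ ∑ a', WWi P n φ i (a', b) :=
  Finset.single_le_sum (fun a' _ => WWi_nonneg P n φ hP0 i (a', b)) (mem_univ a)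

lemma qqi_nonneg (hP0 : ∀ a, 0 ≤ P a) (i : Fin n) (b : A) :
    0 ≤ ∑ a', WWi P n φ i (a', b) :=
  Finset.sum_nonneg (fun a' _ => WWi_nonneg P n φ hP0 i (a', b))

lemma sum_QQ (hP1 : ∑ a, P a = 1) (hn : 1 ≤ n) : ∑ x : Fin n → A, QQ P n x = 1 := by
  have := sum_QQ_mul P n hP1 ⟨0, hn⟩ (fun _ => 1)
  simpa [hP1] using this

/-- Step B : `∑ i, I_i ≤ log |C|`. -/
lemma sumIi_le (hP0 : ∀ a, 0 ≤ P a) (hP1 : ∑ a, P a = 1) (hn : 1 ≤ n)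
    (C : Finset (Fin n → A)) (hmem : ∀ x, φ x ∈ C) :
    ∑ i, ∑ p : A × A, WWi P n φ i p *
        Real.log (WWi P n φ i p / (P p.1 * ∑ a', WWi P n φ i (a', p.2)))
      ≤ Real.log C.card := by
  set r : Fin n → (Fin n → A) → ℝ := fun i x =>
    WWi P n φ i (x i, φ x i) / (P (x i) * ∑ a', WWi P n φ i (a', φ x i)) with hr
  set G : (Fin n → A) → ℝ := fun x => ∏ i, r i x with hG
  have hr0 : ∀ i x, 0 ≤ r i x := by
    intro i x
    apply div_nonneg (WWi_nonneg P n φ hP0 i _)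
    exact mul_nonneg (hP0 _) (qqi_nonneg P n φ hP0 i _)
  have hG0 : ∀ x, 0 ≤ G x := fun x => Finset.prod_nonneg (fun i _ => hr0 i x)
  -- positivity on the support of QQ
  have hrpos : ∀ x, 0 < QQ P n x → ∀ i, 0 < r i x := by
    intro x hx i
    have hPx : 0 < P (x i) := by
      rcases (hP0 (x i)).eq_or_lt with h | h
      · exfalso
        have : QQ P n x = 0 := Finset.prod_eq_zero (mem_univ i) h.symm
        rw [this] at hx; exact lt_irrefl 0 hx
      · exact h
    have hW : QQ P n x ≤ WWi P n φ i (x i, φ x i) := by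
      have : ∀ x' : Fin n → A, 0 ≤ (if ((x i : A), φ x i) = (x' i, φ x' i)
          then QQ P n x' else 0) := by
        intro x'; split
        · exact QQ_nonneg P n hP0 x'
        · exact le_refl 0
      have h2 := Finset.single_le_sum (fun x' _ => this x') (mem_univ x)
      simpa [WWi] using h2
    have hWpos : 0 < WWi P n φ i (x i, φ x i) := lt_of_lt_of_le hx hW
    have hqpos : 0 < ∑ a', WWi P n φ i (a', φ x i) :=
      lt_of_lt_of_le hWpos (WWi_le_qqi P n φ hP0 i _ _)
    exact div_pos hWpos (mul_pos hPx hqpos)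
  have hGpos : ∀ x, 0 < QQ P n x → 0 < G x :=
    fun x hx => Finset.prod_pos (fun i _ => hrpos x hx i)
  -- rewrite each I_i via the pushforward identity
  have hIi : ∀ i : Fin n, ∑ p : A × A, WWi P n φ i p *
      Real.log (WWi P n φ i p / (P p.1 * ∑ a', WWi P n φ i (a', p.2)))
      = ∑ x : Fin n → A, QQ P n x * Real.log (r i x) :=
    fun i => sum_WWi_mul P n φ i
      (fun p => Real.log (WWi P n φ i p / (P p.1 * ∑ a', WWi P n φ i (a', p.2))))
  rw [Finset.sum_congr rfl (fun i _ => hIi i), Finset.sum_comm]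
  have hswap : ∀ x : Fin n → A, ∑ i, QQ P n x * Real.log (r i x)
      = QQ P n x * ∑ i, Real.log (r i x) := fun x => (Finset.mul_sum _ _ _).symm
  rw [Finset.sum_congr rfl (fun x _ => hswap x)]
  -- Jensen for log
  set c : ℝ := ∑ x : Fin n → A, QQ P n x * G x with hc
  have hx0 : ∃ x : Fin n → A, 0 < QQ P n x := by
    by_contra h
    push_neg at h
    have : ∑ x : Fin n → A, QQ P n x ≤ 0 := Finset.sum_nonpos (fun x _ => h x)
    rw [sum_QQ P n hP1 hn] at this; linarith
  obtain ⟨x0, hx0⟩ := hx0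
  have hc0 : 0 < c := by
    have h1 : QQ P n x0 * G x0 ≤ c :=
      Finset.single_le_sum
        (fun x _ => mul_nonneg (QQ_nonneg P n hP0 x) (hG0 x)) (mem_univ x0)
    exact lt_of_lt_of_le (mul_pos hx0 (hGpos x0 hx0)) h1
  have key : ∀ x : Fin n → A, QQ P n x * ∑ i, Real.log (r i x)
      ≤ QQ P n x * (Real.log c + G x / c - 1) := by
    intro x
    rcases (QQ_nonneg P n hP0 x).eq_or_lt with h | h
    · rw [← h]; simp
    · have hlog : ∑ i, Real.log (r i x) = Real.log (G x) :=
        (Real.log_prod (s := univ) (f := fun i => r i x) (fun i _ => ne_of_gt (hrpos x h i))).symm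
      rw [hlog]
      apply mul_le_mul_of_nonneg_left _ (le_of_lt h)
      have h2 : Real.log (G x / c) ≤ G x / c - 1 :=
        Real.log_le_sub_one_of_pos (div_pos (hGpos x h) hc0)
      rw [Real.log_div (ne_of_gt (hGpos x h)) (ne_of_gt hc0)] at h2
      linarith
  have hsum : ∑ x : Fin n → A, QQ P n x * ∑ i, Real.log (r i x)
      ≤ ∑ x : Fin n → A, QQ P n x * (Real.log c + G x / c - 1) :=
    Finset.sum_le_sum (fun x _ => key x)
  have hrhs : ∑ x : Fin n → A, QQ P n x * (Real.log c + G x / c - 1) = Real.log c := by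
    have expand : ∀ x : Fin n → A, QQ P n x * (Real.log c + G x / c - 1)
        = QQ P n x * (Real.log c - 1) + (QQ P n x * G x) / c := by
      intro x; field_simp; ring
    rw [Finset.sum_congr rfl (fun x _ => expand x), Finset.sum_add_distrib,
      ← Finset.sum_mul, ← Finset.sum_div, sum_QQ P n hP1 hn, ← hc]
    field_simp
    ring
  rw [hrhs] at hsum
  -- bound c by |C|
  have hcle : c ≤ C.card := by
    have step1 : ∀ x : Fin n → A, QQ P n x * G x ≤ ∑ y ∈ C, QQ P n x *
        ∏ i, (WWi P n φ i (x i, y i) / (P (x i) * ∑ a', WWi P n φ i (a', y i))) := by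
      intro x
      have hnn : ∀ y ∈ C, 0 ≤ QQ P n x *
          ∏ i, (WWi P n φ i (x i, y i) / (P (x i) * ∑ a', WWi P n φ i (a', y i))) := by
        intro y _
        apply mul_nonneg (QQ_nonneg P n hP0 x)
        apply Finset.prod_nonneg
        intro i _
        exact div_nonneg (WWi_nonneg P n φ hP0 i _)
          (mul_nonneg (hP0 _) (qqi_nonneg P n φ hP0 i _))
      exact Finset.single_le_sum hnn (hmem x)
    have step2 : c ≤ ∑ y ∈ C, ∑ x : Fin n → A, QQ P n x *
        ∏ i, (WWi P n φ i (x i, y i) / (P (x i) * ∑ a', WWi P n φ i (a', y i))) := by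
      rw [Finset.sum_comm]
      exact Finset.sum_le_sum (fun x _ => step1 x)
    have step3 : ∀ y ∈ C, ∑ x : Fin n → A, QQ P n x *
        ∏ i, (WWi P n φ i (x i, y i) / (P (x i) * ∑ a', WWi P n φ i (a', y i))) ≤ 1 := by
      intro y _
      have rw1 : ∀ x : Fin n → A, QQ P n x *
          ∏ i, (WWi P n φ i (x i, y i) / (P (x i) * ∑ a', WWi P n φ i (a', y i)))
          = ∏ i, (fun i a => P a * (WWi P n φ i (a, y i) /
              (P a * ∑ a', WWi P n φ i (a', y i)))) i (x i) := by
        intro x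
        rw [QQ, ← Finset.prod_mul_distrib]
      rw [Finset.sum_congr rfl (fun x _ => rw1 x)]
      have e1 : ∑ x : Fin n → A, ∏ i, (fun i a => P a * (WWi P n φ i (a, y i) /
            (P a * ∑ a', WWi P n φ i (a', y i)))) i (x i)
          = ∑ x ∈ Fintype.piFinset (fun _ : Fin n => (univ : Finset A)),
            ∏ i, (fun i a => P a * (WWi P n φ i (a, y i) /
            (P a * ∑ a', WWi P n φ i (a', y i)))) i (x i) := by
        rw [Fintype.piFinset_univ]
      have e2 := Finset.prod_univ_sum (fun _ : Fin n => (univ : Finset A))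
        (fun i a => P a * (WWi P n φ i (a, y i) / (P a * ∑ a', WWi P n φ i (a', y i))))
      rw [e1, ← e2]
      apply Finset.prod_le_one
      · intro i _
        apply Finset.sum_nonneg
        intro a _
        exact mul_nonneg (hP0 a) (div_nonneg (WWi_nonneg P n φ hP0 i _)
          (mul_nonneg (hP0 a) (qqi_nonneg P n φ hP0 i _)))
      · intro i _
        set q := ∑ a', WWi P n φ i (a', y i) with hq
        rcases (qqi_nonneg P n φ hP0 i (y i)).eq_or_lt with h | h
        · have : ∀ a : A, P a * (WWi P n φ i (a, y i) / (P a * q)) = 0 := by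
            intro a
            have hq0 : q = 0 := hq.trans h.symm
            rw [hq0]; simp
          rw [Finset.sum_congr rfl (fun a _ => this a)]; simp
        · have hterm : ∀ a : A, P a * (WWi P n φ i (a, y i) / (P a * q))
              = WWi P n φ i (a, y i) / q := by
            intro a
            rcases (hP0 a).eq_or_lt with hPa | hPa
            · have hW0 : WWi P n φ i (a, y i) = 0 :=
                le_antisymm (by rw [hPa]; exact WWi_le_P P n φ hP0 hP1 i a (y i))
                  (WWi_nonneg P n φ hP0 i _)
              rw [hW0, ← hPa]; simp
            · rw [mul_div_assoc']
              rw [mul_div_mul_left _ _ (ne_of_gt hPa)]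
          rw [Finset.sum_congr rfl (fun a _ => hterm a), ← Finset.sum_div, ← hq,
            div_self (ne_of_gt h)]
    calc c ≤ _ := step2
      _ ≤ ∑ _y ∈ C, (1 : ℝ) := Finset.sum_le_sum step3
      _ = C.card := by simp
  exact le_trans hsum (Real.log_le_log hc0 hcle)

lemma Wb_margX (hP1 : ∑ a, P a = 1) (hn : 1 ≤ n) (a : A) :
    ∑ b, (1/(n:ℝ)) * ∑ i, WWi P n φ i (a, b) = P a := by
  have hne : (n:ℝ) ≠ 0 := by positivity
  rw [← Finset.mul_sum, Finset.sum_comm]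
  rw [Finset.sum_congr rfl (fun i _ => WWi_margX P n φ hP1 i a)]
  rw [Finset.sum_const, card_univ, Fintype.card_fin]
  field_simp
  simp [nsmul_eq_mul]

/-- Step A : `mi Wb ≤ (1/n) ∑ i, I_i` (stated with `mi` unfolded). -/
lemma stepA (hP0 : ∀ a, 0 ≤ P a) (hP1 : ∑ a, P a = 1) (hn : 1 ≤ n) :
    ∑ p : A × A, ((1/(n:ℝ)) * ∑ i, WWi P n φ i p) *
        Real.log (((1/(n:ℝ)) * ∑ i, WWi P n φ i p) /
          ((∑ b, (1/(n:ℝ)) * ∑ i, WWi P n φ i (p.1, b)) *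
            (∑ a, (1/(n:ℝ)) * ∑ i, WWi P n φ i (a, p.2))))
      ≤ (1/(n:ℝ)) * ∑ i, ∑ p : A × A, WWi P n φ i p *
          Real.log (WWi P n φ i p / (P p.1 * ∑ a', WWi P n φ i (a', p.2))) := by
  have hne : (1/(n:ℝ)) ≠ 0 := by positivity
  have hpos : (0:ℝ) ≤ 1/(n:ℝ) := by positivity
  have key : ∀ p : A × A, ((1/(n:ℝ)) * ∑ i, WWi P n φ i p) *
      Real.log (((1/(n:ℝ)) * ∑ i, WWi P n φ i p) /
        ((∑ b, (1/(n:ℝ)) * ∑ i, WWi P n φ i (p.1, b)) *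
          (∑ a, (1/(n:ℝ)) * ∑ i, WWi P n φ i (a, p.2))))
      ≤ (1/(n:ℝ)) * ∑ i, WWi P n φ i p *
          Real.log (WWi P n φ i p / (P p.1 * ∑ a', WWi P n φ i (a', p.2))) := by
    intro p
    have hls := logsum univ (fun i => WWi P n φ i p)
      (fun i => P p.1 * ∑ a', WWi P n φ i (a', p.2))
      (fun i _ => WWi_nonneg P n φ hP0 i p)
      (fun i _ => mul_nonneg (hP0 _) (qqi_nonneg P n φ hP0 i _))
      (by
        intro i _ hv
        rcases mul_eq_zero.1 hv with h | h
        · refine le_antisymm ?_ (WWi_nonneg P n φ hP0 i p)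
          calc WWi P n φ i p = WWi P n φ i (p.1, p.2) := by rw [Prod.mk.eta]
            _ ≤ P p.1 := WWi_le_P P n φ hP0 hP1 i p.1 p.2
            _ = 0 := h
        · refine le_antisymm ?_ (WWi_nonneg P n φ hP0 i p)
          calc WWi P n φ i p = WWi P n φ i (p.1, p.2) := by rw [Prod.mk.eta]
            _ ≤ ∑ a', WWi P n φ i (a', p.2) := WWi_le_qqi P n φ hP0 i p.1 p.2
            _ = 0 := h)
    have hm1 : ∑ b, (1/(n:ℝ)) * ∑ i, WWi P n φ i (p.1, b) = P p.1 :=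
      Wb_margX P n φ hP1 hn p.1
    have hm2 : ∑ a, (1/(n:ℝ)) * ∑ i, WWi P n φ i (a, p.2)
        = (1/(n:ℝ)) * ∑ i, ∑ a', WWi P n φ i (a', p.2) := by
      rw [← Finset.mul_sum, Finset.sum_comm]
    have hT : P p.1 * ((1/(n:ℝ)) * ∑ i, ∑ a', WWi P n φ i (a', p.2))
        = (1/(n:ℝ)) * ∑ i, P p.1 * ∑ a', WWi P n φ i (a', p.2) := by
      rw [← Finset.mul_sum]; ring
    rw [hm1, hm2, hT, mul_div_mul_left _ _ hne, mul_assoc]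
    exact mul_le_mul_of_nonneg_left hls hpos
  calc ∑ p : A × A, ((1/(n:ℝ)) * ∑ i, WWi P n φ i p) *
        Real.log (((1/(n:ℝ)) * ∑ i, WWi P n φ i p) /
          ((∑ b, (1/(n:ℝ)) * ∑ i, WWi P n φ i (p.1, b)) *
            (∑ a, (1/(n:ℝ)) * ∑ i, WWi P n φ i (a, p.2))))
      ≤ ∑ p : A × A, (1/(n:ℝ)) * ∑ i, WWi P n φ i p *
          Real.log (WWi P n φ i p / (P p.1 * ∑ a', WWi P n φ i (a', p.2))) :=
        Finset.sum_le_sum (fun p _ => key p)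
    _ = (1/(n:ℝ)) * ∑ i, ∑ p : A × A, WWi P n φ i p *
          Real.log (WWi P n φ i p / (P p.1 * ∑ a', WWi P n φ i (a', p.2))) := by
        rw [← Finset.mul_sum, Finset.sum_comm]

end Aux

lemma mi_nonneg {S T : Type*} [Fintype S] [Fintype T] (W : S × T → ℝ)
    (h0 : ∀ p, 0 ≤ W p) (h1 : ∑ p, W p = 1) : 0 ≤ mi W := by
  have hmx : ∀ p : S × T, W p ≤ ∑ t, W (p.1, t) := by
    intro p
    calc W p = W (p.1, p.2) := by rw [Prod.mk.eta]
      _ ≤ ∑ t, W (p.1, t) := Finset.single_le_sum (fun t _ => h0 (p.1, t)) (mem_univ p.2)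
  have hmy : ∀ p : S × T, W p ≤ ∑ s, W (s, p.2) := by
    intro p
    calc W p = W (p.1, p.2) := by rw [Prod.mk.eta]
      _ ≤ ∑ s, W (s, p.2) := Finset.single_le_sum (fun s _ => h0 (s, p.2)) (mem_univ p.1)
  have hls := logsum univ W
    (fun p : S × T => (∑ t, W (p.1, t)) * (∑ s, W (s, p.2)))
    (fun p _ => h0 p)
    (fun p _ => mul_nonneg (Finset.sum_nonneg (fun t _ => h0 _))
      (Finset.sum_nonneg (fun s _ => h0 _)))
    (by
      intro p _ hv
      rcases mul_eq_zero.1 hv with h | h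
      · exact le_antisymm (h ▸ hmx p) (h0 p)
      · exact le_antisymm (h ▸ hmy p) (h0 p))
  have hv1 : ∑ p : S × T, (∑ t, W (p.1, t)) * (∑ s, W (s, p.2)) = 1 := by
    rw [Fintype.sum_prod_type]
    have : ∀ a : S, ∑ b : T, (∑ t, W (a, t)) * (∑ s, W (s, b))
        = (∑ t, W (a, t)) * ∑ b : T, (∑ s, W (s, b)) := fun a => (Finset.mul_sum _ _ _).symm
    rw [Finset.sum_congr rfl (fun a _ => this a), ← Finset.sum_mul]
    have e1 : ∑ a : S, ∑ t, W (a, t) = 1 := by rw [← Fintype.sum_prod_type]; exact h1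
    have e2 : ∑ b : T, ∑ s, W (s, b) = 1 := by rw [← Fintype.sum_prod_type_right]; exact h1
    rw [e1, e2, one_mul]
  rw [h1, hv1] at hls
  simpa [mi] using hls


/-- Converse part of Shannon's rate-distortion theorem: for any nonempty codebook
`C_n ⊆ Aⁿ` with `D = E_{Pⁿ}[min_{y∈C_n} ρ_n(X₁ⁿ,y)]`, `(1/n) log |C_n| ≥ R_S(D)`. -/
theorem stmt_12 {A : Type*} [Fintype A] (P : A → ℝ) (hP0 : ∀ a, 0 ≤ P a)
    (hP1 : ∑ a, P a = 1) (ρ : A → A → ℝ) (hρ : ∀ a b, 0 ≤ ρ a b)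
    (n : ℕ) (hn : 1 ≤ n) (C : Finset (Fin n → A)) (hC : C.Nonempty) :
    sInf (mi '' {W | Feasible P ρ (∑ x : Fin n → A, (∏ i, P (x i)) *
        C.inf' hC (fun y => (1 / (n : ℝ)) * ∑ i, ρ (x i) (y i))) W})
      ≤ (1 / (n : ℝ)) * Real.log (C.card : ℝ) := by
  classical
  have hφ : ∀ x : Fin n → A, ∃ y ∈ C,
      C.inf' hC (fun y => (1 / (n : ℝ)) * ∑ i, ρ (x i) (y i))
        = (1 / (n : ℝ)) * ∑ i, ρ (x i) (y i) :=
    fun x => C.exists_mem_eq_inf' hC _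
  choose φ hmem hval using hφ
  have hne : (n:ℝ) ≠ 0 := by positivity
  set Wb : A × A → ℝ := fun p => (1/(n:ℝ)) * ∑ i, WWi P n φ i p with hWb
  -- Feasibility
  have hWb0 : ∀ p, 0 ≤ Wb p := by
    intro p
    apply mul_nonneg (by positivity)
    exact Finset.sum_nonneg (fun i _ => WWi_nonneg P n φ hP0 i p)
  have hWbsum : ∑ p : A × A, Wb p = 1 := by
    rw [hWb, ← Finset.mul_sum, Finset.sum_comm]
    have : ∀ i : Fin n, ∑ p : A × A, WWi P n φ i p = 1 := by
      intro i
      have := sum_WWi_mul P n φ i (fun _ => 1)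
      simpa [sum_QQ P n hP1 hn] using this
    rw [Finset.sum_congr rfl (fun i _ => this i), Finset.sum_const, card_univ,
      Fintype.card_fin]
    field_simp
    simp [nsmul_eq_mul]
  have hWbX : ∀ a, ∑ b, Wb (a, b) = P a := fun a => Wb_margX P n φ hP1 hn a
  have hWbD : ∑ p : A × A, Wb p * ρ p.1 p.2
      = ∑ x : Fin n → A, (∏ i, P (x i)) *
          C.inf' hC (fun y => (1 / (n : ℝ)) * ∑ i, ρ (x i) (y i)) := by
    have e0 : ∀ p : A × A, Wb p * ρ p.1 p.2
        = (1/(n:ℝ)) * ∑ i, WWi P n φ i p * ρ p.1 p.2 := by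
      intro p; rw [hWb]; rw [← Finset.sum_mul]; ring
    rw [Finset.sum_congr rfl (fun p _ => e0 p), ← Finset.mul_sum, Finset.sum_comm]
    have e1 : ∀ i : Fin n, ∑ p : A × A, WWi P n φ i p * ρ p.1 p.2
        = ∑ x : Fin n → A, QQ P n x * ρ (x i) (φ x i) :=
      fun i => sum_WWi_mul P n φ i (fun p => ρ p.1 p.2)
    rw [Finset.sum_congr rfl (fun i _ => e1 i), Finset.sum_comm, Finset.mul_sum]
    refine Finset.sum_congr rfl (fun x _ => ?_)
    rw [hval x, QQ]
    rw [← Finset.mul_sum]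
    ring
  have hfeas : Feasible P ρ (∑ x : Fin n → A, (∏ i, P (x i)) *
      C.inf' hC (fun y => (1 / (n : ℝ)) * ∑ i, ρ (x i) (y i))) Wb :=
    ⟨hWb0, hWbsum, hWbX, le_of_eq hWbD⟩
  -- the bound on mi Wb
  have hbound : mi Wb ≤ (1 / (n : ℝ)) * Real.log (C.card : ℝ) := by
    have hA := stepA P n φ hP0 hP1 hn
    have hB := sumIi_le P n φ hP0 hP1 hn C hmem
    have : mi Wb ≤ (1/(n:ℝ)) * ∑ i, ∑ p : A × A, WWi P n φ i p *
        Real.log (WWi P n φ i p / (P p.1 * ∑ a', WWi P n φ i (a', p.2))) := hA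
    refine le_trans this ?_
    exact mul_le_mul_of_nonneg_left hB (by positivity)
  -- conclude via csInf
  have hmemS : mi Wb ∈ mi '' {W | Feasible P ρ (∑ x : Fin n → A, (∏ i, P (x i)) *
      C.inf' hC (fun y => (1 / (n : ℝ)) * ∑ i, ρ (x i) (y i))) W} :=
    ⟨Wb, hfeas, rfl⟩
  have hbdd : BddBelow (mi '' {W | Feasible P ρ (∑ x : Fin n → A, (∏ i, P (x i)) *
      C.inf' hC (fun y => (1 / (n : ℝ)) * ∑ i, ρ (x i) (y i))) W}) := by
    refine ⟨0, ?_⟩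
    rintro z ⟨W, hW, rfl⟩
    exact mi_nonneg W hW.1 hW.2.1
  exact le_trans (csInf_le hbdd hmemS) hbound
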